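/- arXiv:2409.09158 — 3 statements merged into one kernel-verified Lean document; each statement's English description precedes it below -/
import Mathlib

section
/- Assume the coverage constraint (E2) and the flow-conservation constraint (E3) hold, the precedence-time constraint holds, and s(i) > 0 for every call i. If x(i,k) = 1 for some call i and ambulance k (i.e., i is the first call served by ambulance k), then there exist n ≥ 0 and pairwise distinct calls j₀ = i, j₁, …, jₙ such that w(j_l, j_{l+1}, k) = 1 for every l < n and z(jₙ, k) = 1; that is, ambulance k serves a finite chain of calls starting at its first call i and ending at a call jₙ which is the last call served by k. -/
open Finset

/-- Under the coverage constraint (E2), the flow-conservation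
constraint (E3), the precedence-time constraint and positive service times,
if x(i,k) = 1 then ambulance k serves a finite chain of pairwise distinct calls
starting at its first call i and ending at a call jₙ with z(jₙ,k) = 1. -/
theorem first_call_chain_to_last
    {C A : Type*} [Fintype C] [Fintype A] [DecidableEq C]
    (t s : C → ℝ) (x z : C → A → ℕ) (w : C → C → A → ℕ)
    (hx : ∀ i k, x i k = 0 ∨ x i k = 1)
    (hz : ∀ i k, z i k = 0 ∨ z i k = 1)
    (hw : ∀ i j k, w i j k = 0 ∨ w i j k = 1)
    (hE2 : ∀ i, (∑ k, x i k) +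
        ∑ k, ∑ j ∈ univ.filter (fun j => j ≠ i), w j i k = 1)
    (hE3 : ∀ i k, x i k + ∑ j ∈ univ.filter (fun j => j ≠ i), w j i k
        = z i k + ∑ j ∈ univ.filter (fun j => j ≠ i), w i j k)
    (hprec : ∀ i j k, w i j k = 1 → t i + s i ≤ t j)
    (hs : ∀ i, 0 < s i)
    (i : C) (k : A) (hxi : x i k = 1) :
    ∃ (n : ℕ) (j : ℕ → C), j 0 = i ∧
      (∀ l₁ l₂, l₁ ≤ n → l₂ ≤ n → l₁ ≠ l₂ → j l₁ ≠ j l₂) ∧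
      (∀ l < n, w (j l) (j (l + 1)) k = 1) ∧
      z (j n) k = 1 := by
  classical
  suffices H : ∀ N (c : C), (univ.filter (fun d => t c < t d)).card ≤ N →
      (x c k = 1 ∨ ∃ p, p ≠ c ∧ w p c k = 1) →
      ∃ (n : ℕ) (j : ℕ → C), j 0 = c ∧ (∀ l < n, w (j l) (j (l+1)) k = 1) ∧
        z (j n) k = 1 ∧ (∀ l < n, t (j l) < t (j (l+1))) by
    obtain ⟨n, j, h0, hchain, hzn, hmono⟩ := H _ i le_rfl (Or.inl hxi)
    refine ⟨n, j, h0, ?_, hchain, hzn⟩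
    have hlt : ∀ l₁ l₂, l₂ ≤ n → l₁ < l₂ → t (j l₁) < t (j l₂) := by
      intro l₁ l₂ hl₂ h
      induction l₂ with
      | zero => omega
      | succ m ih =>
        rcases Nat.lt_or_ge l₁ m with h' | h'
        · exact lt_trans (ih (by omega) h') (hmono m (by omega))
        · have : l₁ = m := by omega
          subst this
          exact hmono l₁ (by omega)
    intro l₁ l₂ h1 h2 hne he
    rcases lt_or_gt_of_ne hne with h | h
    · exact absurd (he ▸ hlt l₁ l₂ h2 h) (lt_irrefl _)
    · exact absurd (he ▸ hlt l₂ l₁ h1 h) (lt_irrefl _)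
  intro N
  induction N with
  | zero =>
    intro c hcard hent
    -- step: either z c k = 1 or a successor exists, but successor impossible
    have hE3c := hE3 c k
    have hpos : 1 ≤ x c k + ∑ j ∈ univ.filter (fun j => j ≠ c), w j c k := by
      rcases hent with h | ⟨p, hp, hpw⟩
      · omega
      · have : w p c k ≤ ∑ j ∈ univ.filter (fun j => j ≠ c), w j c k :=
          Finset.single_le_sum (f := fun j => w j c k) (fun _ _ => Nat.zero_le _) (Finset.mem_filter.mpr ⟨Finset.mem_univ p, hp⟩)
        omega
    rcases hz c k with hzc | hzc
    · -- must exist successor, contradiction with card = 0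
      have hsum : 1 ≤ ∑ j ∈ univ.filter (fun j => j ≠ c), w c j k := by omega
      obtain ⟨j', hj', hwj'⟩ : ∃ j', j' ≠ c ∧ w c j' k = 1 := by
        by_contra hcon
        push_neg at hcon
        have : ∑ j ∈ univ.filter (fun j => j ≠ c), w c j k = 0 := by
          apply Finset.sum_eq_zero
          intro j hj
          simp only [mem_filter, mem_univ, true_and] at hj
          rcases hw c j k with h | h
          · exact h
          · exact absurd h (hcon j hj)
        omega
      have htlt : t c < t j' := by
        have := hprec c j' k hwj'
        have := hs c
        linarith
      have : j' ∈ univ.filter (fun d => t c < t d) := by simp [htlt]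
      have : 0 < (univ.filter (fun d => t c < t d)).card :=
        Finset.card_pos.mpr ⟨j', this⟩
      omega
    · exact ⟨0, fun _ => c, rfl, by omega, hzc, by omega⟩
  | succ N ih =>
    intro c hcard hent
    have hE3c := hE3 c k
    have hpos : 1 ≤ x c k + ∑ j ∈ univ.filter (fun j => j ≠ c), w j c k := by
      rcases hent with h | ⟨p, hp, hpw⟩
      · omega
      · have : w p c k ≤ ∑ j ∈ univ.filter (fun j => j ≠ c), w j c k :=
          Finset.single_le_sum (f := fun j => w j c k) (fun _ _ => Nat.zero_le _) (Finset.mem_filter.mpr ⟨Finset.mem_univ p, hp⟩)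
        omega
    rcases hz c k with hzc | hzc
    · have hsum : 1 ≤ ∑ j ∈ univ.filter (fun j => j ≠ c), w c j k := by omega
      obtain ⟨j', hj', hwj'⟩ : ∃ j', j' ≠ c ∧ w c j' k = 1 := by
        by_contra hcon
        push_neg at hcon
        have : ∑ j ∈ univ.filter (fun j => j ≠ c), w c j k = 0 := by
          apply Finset.sum_eq_zero
          intro j hj
          simp only [mem_filter, mem_univ, true_and] at hj
          rcases hw c j k with h | h
          · exact h
          · exact absurd h (hcon j hj)
        omega
      have htlt : t c < t j' := by
        have := hprec c j' k hwj'
        have := hs c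
        linarith
      have hsub : (univ.filter (fun d => t j' < t d)) ⊂
          (univ.filter (fun d => t c < t d)) := by
        constructor
        · intro d hd
          simp only [mem_filter, mem_univ, true_and] at hd ⊢
          exact lt_trans htlt hd
        · intro hsub'
          have : j' ∈ univ.filter (fun d => t j' < t d) :=
            hsub' (by simp [htlt])
          simp at this
      have hcard' : (univ.filter (fun d => t j' < t d)).card ≤ N := by
        have := Finset.card_lt_card hsub
        omega
      obtain ⟨n, f, hf0, hfchain, hfz, hfmono⟩ :=
        ih j' hcard' (Or.inr ⟨c, Ne.symm hj', hwj'⟩)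
      refine ⟨n + 1, fun m => if m = 0 then c else f (m - 1), by simp, ?_, ?_, ?_⟩
      · intro l hl
        rcases Nat.eq_zero_or_pos l with rfl | hl0
        · simpa [hf0] using hwj'
        · have h1 : l ≠ 0 := by omega
          have h2 : l + 1 ≠ 0 := by omega
          simp only [h1, h2, if_false]
          have : l - 1 + 1 = l + 1 - 1 := by omega
          rw [← this]
          exact hfchain (l - 1) (by omega)
      · simp only [Nat.add_eq_zero, if_neg (by omega : ¬ (n + 1 = 0))]
        simpa using hfz
      · intro l hl
        rcases Nat.eq_zero_or_pos l with rfl | hl0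
        · simpa [hf0] using htlt
        · have h1 : l ≠ 0 := by omega
          have h2 : l + 1 ≠ 0 := by omega
          simp only [h1, h2, if_false]
          have : l - 1 + 1 = l + 1 - 1 := by omega
          rw [← this]
          exact hfmono (l - 1) (by omega)
    · exact ⟨0, fun _ => c, rfl, by omega, hzc, by omega⟩
end

section
/- Assume the coverage constraint (E2) and the flow-conservation constraint (E3) hold, the precedence-time constraint holds, and s(i) > 0 for every call i. If z(i,k) = 1 for some call i and ambulance k (i.e., i is the last call served by ambulance k), then (a) w(i,j,k) = 0 for every call j ≠ i (no call is served by k after i), and (b) there exist n ≥ 0 and pairwise distinct calls j₀, j₁, …, jₙ = i such that x(j₀,k) = 1 and w(j_l, j_{l+1}, k) = 1 for every l < n; that is, ambulance k also has a first served call, reached from which call i is the end of a finite chain of precedences. -/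
open Finset

/-- Under (E2), (E3), the precedence-time constraint and positive
service times, if z(i,k) = 1 then (a) w(i,j,k) = 0 for every call j ≠ i (no call
is served by k after i), and (b) there exist n ≥ 0 and pairwise distinct calls
j₀,…,jₙ = i with x(j₀,k) = 1 and w(j_l, j_{l+1}, k) = 1 for every l < n. -/
theorem last_call_chain_from_first
    {C A : Type*} [Fintype C] [Fintype A] [DecidableEq C]
    (t s : C → ℝ) (x z : C → A → ℕ) (w : C → C → A → ℕ)
    (hx : ∀ i k, x i k = 0 ∨ x i k = 1)
    (hz : ∀ i k, z i k = 0 ∨ z i k = 1)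
    (hw : ∀ i j k, w i j k = 0 ∨ w i j k = 1)
    (hE2 : ∀ i, (∑ k, x i k) +
        ∑ k, ∑ j ∈ univ.filter (fun j => j ≠ i), w j i k = 1)
    (hE3 : ∀ i k, x i k + ∑ j ∈ univ.filter (fun j => j ≠ i), w j i k
        = z i k + ∑ j ∈ univ.filter (fun j => j ≠ i), w i j k)
    (hprec : ∀ i j k, w i j k = 1 → t i + s i ≤ t j)
    (hs : ∀ i, 0 < s i)
    (i : C) (k : A) (hzi : z i k = 1) :
    (∀ j, j ≠ i → w i j k = 0) ∧
    (∃ (n : ℕ) (j : ℕ → C), j n = i ∧ x (j 0) k = 1 ∧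
      (∀ l₁ l₂, l₁ ≤ n → l₂ ≤ n → l₁ ≠ l₂ → j l₁ ≠ j l₂) ∧
      (∀ l < n, w (j l) (j (l + 1)) k = 1)) := by
  classical
  have hle : x i k + ∑ j ∈ univ.filter (fun j => j ≠ i), w j i k ≤ 1 := by
    have h1 : x i k ≤ ∑ k', x i k' :=
      Finset.single_le_sum (fun _ _ => Nat.zero_le _) (mem_univ k)
    have h2 : ∑ j ∈ univ.filter (fun j => j ≠ i), w j i k ≤
        ∑ k', ∑ j ∈ univ.filter (fun j => j ≠ i), w j i k' :=
      Finset.single_le_sum (f := fun k' => ∑ j ∈ univ.filter (fun j => j ≠ i), w j i k')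
        (fun _ _ => Nat.zero_le _) (mem_univ k)
    have := hE2 i
    omega
  have hE3i := hE3 i k
  have hout : ∑ j ∈ univ.filter (fun j => j ≠ i), w i j k = 0 := by omega
  have parta : ∀ j, j ≠ i → w i j k = 0 := by
    intro j hj
    exact (Finset.sum_eq_zero_iff.mp hout) j (by simp [hj])
  refine ⟨parta, ?_⟩
  have key : ∀ N c, (univ.filter (fun j => t j < t c)).card ≤ N →
      1 ≤ x c k + ∑ j ∈ univ.filter (fun j => j ≠ c), w j c k →
      ∃ (n : ℕ) (j : ℕ → C), j n = c ∧ x (j 0) k = 1 ∧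
        (∀ l₁ l₂, l₁ < l₂ → l₂ ≤ n → t (j l₁) < t (j l₂)) ∧
        (∀ l < n, w (j l) (j (l + 1)) k = 1) := by
    intro N
    induction N with
    | zero =>
      intro c hcard hpos
      have hxc : x c k = 1 := by
        rcases hx c k with h0 | h1
        · exfalso
          have hsum0 : ∑ j ∈ univ.filter (fun j => j ≠ c), w j c k ≠ 0 := by omega
          obtain ⟨j0, hj0mem, hj0⟩ := Finset.exists_ne_zero_of_sum_ne_zero hsum0
          have hw1 : w j0 c k = 1 := by rcases hw j0 c k with h | h <;> omega
          have ht : t j0 < t c :=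
            lt_of_lt_of_le (lt_add_of_pos_right _ (hs j0)) (hprec _ _ _ hw1)
          have hmem : j0 ∈ univ.filter (fun j => t j < t c) := by simp [ht]
          have := Finset.card_pos.mpr ⟨j0, hmem⟩
          omega
        · exact h1
      exact ⟨0, fun _ => c, rfl, hxc,
        fun l₁ l₂ h h' => absurd (h.trans_le h') (Nat.not_lt_zero _),
        fun l h => absurd h (Nat.not_lt_zero _)⟩
    | succ N ih =>
      intro c hcard hpos
      rcases hx c k with h0 | h1
      · have hsum0 : ∑ j ∈ univ.filter (fun j => j ≠ c), w j c k ≠ 0 := by omega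
        obtain ⟨j0, hj0mem, hj0⟩ := Finset.exists_ne_zero_of_sum_ne_zero hsum0
        have hj0ne : j0 ≠ c := by simpa using hj0mem
        have hw1 : w j0 c k = 1 := by rcases hw j0 c k with h | h <;> omega
        have ht : t j0 < t c :=
          lt_of_lt_of_le (lt_add_of_pos_right _ (hs j0)) (hprec _ _ _ hw1)
        have hsub : univ.filter (fun j => t j < t j0) ⊂ univ.filter (fun j => t j < t c) := by
          constructor
          · intro a ha
            simp only [mem_filter, mem_univ, true_and] at ha ⊢
            exact ha.trans ht
          · intro hcon
            have : j0 ∈ univ.filter (fun j => t j < t j0) := hcon (by simp [ht])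
            simp at this
        have hcard' : (univ.filter (fun j => t j < t j0)).card ≤ N := by
          have := Finset.card_lt_card hsub
          omega
        have hpos' : 1 ≤ x j0 k + ∑ j ∈ univ.filter (fun j => j ≠ j0), w j j0 k := by
          have hE3j := hE3 j0 k
          have hcmem : c ∈ univ.filter (fun j => j ≠ j0) := by simp [Ne.symm hj0ne]
          have h1out : 1 ≤ ∑ j ∈ univ.filter (fun j => j ≠ j0), w j0 j k := by
            calc 1 = w j0 c k := hw1.symm
              _ ≤ _ := Finset.single_le_sum (f := fun j => w j0 j k)
                (fun _ _ => Nat.zero_le _) hcmem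
          omega
        obtain ⟨n, jf, hjn, hjx, hmono, hchain⟩ := ih j0 hcard' hpos'
        refine ⟨n + 1, fun l => if l ≤ n then jf l else c, ?_, ?_, ?_, ?_⟩
        · simp
        · simp [hjx]
        · intro l₁ l₂ hlt hle2
          by_cases h2 : l₂ ≤ n
          · have h1 : l₁ ≤ n := le_of_lt (lt_of_lt_of_le hlt h2)
            simp only [if_pos h1, if_pos h2]
            exact hmono l₁ l₂ hlt h2
          · have h1 : l₁ ≤ n := by omega
            simp only [if_pos h1, if_neg h2]
            rcases lt_or_eq_of_le h1 with h | h
            · exact (hmono l₁ n h le_rfl).trans (hjn ▸ ht)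
            · rw [h, hjn]; exact ht
        · intro l hl
          by_cases h : l < n
          · simp only [if_pos (le_of_lt h), if_pos (Nat.succ_le_of_lt h)]
            exact hchain l h
          · have hln : l = n := by omega
            rw [hln]
            simp only [if_pos le_rfl, if_neg (by omega : ¬ n + 1 ≤ n)]
            rw [hjn]; exact hw1
      · exact ⟨0, fun _ => c, rfl, h1,
          fun l₁ l₂ h h' => absurd (h.trans_le h') (Nat.not_lt_zero _),
          fun l h => absurd h (Nat.not_lt_zero _)⟩
  have hposi : 1 ≤ x i k + ∑ j ∈ univ.filter (fun j => j ≠ i), w j i k := by omega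
  obtain ⟨n, jf, hjn, hjx, hmono, hchain⟩ := key _ i le_rfl hposi
  refine ⟨n, jf, hjn, hjx, ?_, hchain⟩
  intro l₁ l₂ h1 h2 hne he
  rcases lt_or_gt_of_ne hne with h | h
  · have := hmono l₁ l₂ h h2
    rw [he] at this
    exact lt_irrefl _ this
  · have := hmono l₂ l₁ h h1
    rw [he] at this
    exact lt_irrefl _ this
end

section
/- Assume the coverage constraint (E2) and the flow-conservation constraint (E3) hold, the precedence-time constraint holds, and s(i) > 0 for every call i. If an ambulance k has no first served call, i.e., x(i,k) = 0 for every call i, then ambulance k serves no call at all: w(i,j,k) = 0 for all pairs of distinct calls i, j, and z(i,k) = 0 for every call i. -/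
open Finset

/-- Under (E2), (E3), the precedence-time constraint and positive
service times, if an ambulance k has no first served call (x(i,k) = 0 for every
call i), then k serves no call at all: w(i,j,k) = 0 for all distinct calls i, j
and z(i,k) = 0 for every call i. -/
theorem no_first_call_serves_nothing
    {C A : Type*} [Fintype C] [Fintype A] [DecidableEq C]
    (t s : C → ℝ) (x z : C → A → ℕ) (w : C → C → A → ℕ)
    (hx : ∀ i k, x i k = 0 ∨ x i k = 1)
    (hz : ∀ i k, z i k = 0 ∨ z i k = 1)
    (hw : ∀ i j k, w i j k = 0 ∨ w i j k = 1)
    (hE2 : ∀ i, (∑ k, x i k) +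
        ∑ k, ∑ j ∈ univ.filter (fun j => j ≠ i), w j i k = 1)
    (hE3 : ∀ i k, x i k + ∑ j ∈ univ.filter (fun j => j ≠ i), w j i k
        = z i k + ∑ j ∈ univ.filter (fun j => j ≠ i), w i j k)
    (hprec : ∀ i j k, w i j k = 1 → t i + s i ≤ t j)
    (hs : ∀ i, 0 < s i)
    (k : A) (hxk : ∀ i, x i k = 0) :
    (∀ i j, i ≠ j → w i j k = 0) ∧ (∀ i, z i k = 0) := by
  classical
  have key : ∀ i j, i ≠ j → w i j k = 0 := by
    by_contra h
    push_neg at h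
    obtain ⟨i0, j0, hij, hne⟩ := h
    have hw1 : w i0 j0 k = 1 := (hw i0 j0 k).resolve_left hne
    set S : Finset C := univ.filter (fun i => ∃ j, j ≠ i ∧ w j i k = 1) with hS
    have hSne : S.Nonempty := ⟨j0, by
      simp only [hS, mem_filter, mem_univ, true_and]
      exact ⟨i0, hij, hw1⟩⟩
    obtain ⟨m, hmS, hmin⟩ := S.exists_min_image t hSne
    have hmS' := hmS
    simp only [hS, mem_filter, mem_univ, true_and] at hmS'
    obtain ⟨j, hjm, hwjm⟩ := hmS'
    have hout : 1 ≤ z j k + ∑ j' ∈ univ.filter (fun j' => j' ≠ j), w j j' k := by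
      have hle : w j m k ≤ ∑ j' ∈ univ.filter (fun j' => j' ≠ j), w j j' k :=
        Finset.single_le_sum (f := fun j' => w j j' k) (fun _ _ => Nat.zero_le _)
          (mem_filter.mpr ⟨mem_univ m, hjm.symm⟩)
      omega
    have hE3j := hE3 j k
    rw [hxk j] at hE3j
    have hin : 1 ≤ ∑ j' ∈ univ.filter (fun j' => j' ≠ j), w j' j k := by omega
    have hex : ∃ j' ∈ univ.filter (fun j' => j' ≠ j), w j' j k ≠ 0 := by
      by_contra hc
      push_neg at hc
      have : ∑ j' ∈ univ.filter (fun j' => j' ≠ j), w j' j k = 0 :=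
        Finset.sum_eq_zero hc
      omega
    obtain ⟨j', hj'mem, hj'ne⟩ := hex
    simp only [mem_filter, mem_univ, true_and] at hj'mem
    have hwj' : w j' j k = 1 := (hw j' j k).resolve_left hj'ne
    have hjS : j ∈ S := by
      simp only [hS, mem_filter, mem_univ, true_and]
      exact ⟨j', hj'mem, hwj'⟩
    have htm : t m ≤ t j := hmin j hjS
    have hlt : t j + s j ≤ t m := hprec j m k hwjm
    have := hs j
    linarith
  refine ⟨key, fun i => ?_⟩
  have hE3i := hE3 i k
  rw [hxk i] at hE3i
  have hin0 : ∑ j ∈ univ.filter (fun j => j ≠ i), w j i k = 0 :=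
    Finset.sum_eq_zero (fun j hj => key j i (by simpa using hj))
  omega
end
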